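/- Fix reals z1, z2 with z2 < 0 < z1, nonnegative reals g11, g22, g12 with g12 > 0, and bulk concentrations c̄1, c̄2 > 0. Then for every solution trajectory c1 there exists exactly one c2* > 0 such that z1·c1(c2*) + z2·c2* = z1·c̄1 + z2·c̄2 (i.e., c1(c2*) = c̄1 − (z2/z1)·(c2* − c̄2)). -/

import Mathlib

/-- The right-hand side of the trajectory ODE `dc1/dc2 = F(c1, c2)` for stationary
solutions of the PNP-steric system. -/
noncomputable def F (z1 z2 g11 g22 g12 c1 c2 : ℝ) : ℝ :=
  (z1 * (1 / c2 + g22) - z2 * g12) / (z2 * (1 / c1 + g11) - z1 * g12)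

/-- Lemma 2(2) of the paper: every solution trajectory intersects the local
electroneutrality line `{E_x = 0}`, i.e. `z1·c1 + z2·c2 = z1·c̄1 + z2·c̄2`, at exactly one
point. -/
theorem stmt5 (z1 z2 g11 g22 g12 cbar1 cbar2 : ℝ)
    (hz2 : z2 < 0) (hz1 : 0 < z1)
    (hg11 : 0 ≤ g11) (hg22 : 0 ≤ g22) (hg12 : 0 < g12)
    (hcbar1 : 0 < cbar1) (hcbar2 : 0 < cbar2)
    (c1 : ℝ → ℝ)
    (h_pos : ∀ c2 : ℝ, 0 < c2 → 0 < c1 c2)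
    (h_ode : ∀ c2 : ℝ, 0 < c2 → HasDerivAt c1 (F z1 z2 g11 g22 g12 (c1 c2) c2) c2) :
    ∃! c2star : ℝ, 0 < c2star ∧
      z1 * c1 c2star + z2 * c2star = z1 * cbar1 + z2 * cbar2 := by
  set K : ℝ := z1 * cbar1 + z2 * cbar2 with hK
  -- basic sign facts about F
  have hden : ∀ x : ℝ, 0 < x → z2 * (1 / c1 x + g11) - z1 * g12 < 0 := by
    intro x hx
    have h1 : 0 < 1 / c1 x := one_div_pos.mpr (h_pos x hx)
    nlinarith
  have hnum : ∀ x : ℝ, 0 < x → 0 < z1 * (1 / x + g22) - z2 * g12 := by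
    intro x hx
    have h1 : 0 < 1 / x := one_div_pos.mpr hx
    nlinarith
  have hF_neg : ∀ x : ℝ, 0 < x → F z1 z2 g11 g22 g12 (c1 x) x < 0 := fun x hx =>
    div_neg_of_pos_of_neg (hnum x hx) (hden x hx)
  -- c1 is continuous on (0,∞)
  have hc1cont : ContinuousOn c1 (Set.Ioi (0:ℝ)) := fun x hx =>
    (h_ode x hx).continuousAt.continuousWithinAt
  -- c1 is strictly antitone on (0,∞)
  have hc1anti : StrictAntiOn c1 (Set.Ioi (0:ℝ)) := by
    apply strictAntiOn_of_deriv_neg (convex_Ioi 0) hc1cont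
    intro x hx
    rw [interior_Ioi] at hx
    rw [(h_ode x hx).deriv]
    exact hF_neg x hx
  -- the electroneutrality function φ
  set φ : ℝ → ℝ := fun x => z1 * c1 x + z2 * x with hφ
  have hφderiv : ∀ x : ℝ, 0 < x →
      HasDerivAt φ (z1 * F z1 z2 g11 g22 g12 (c1 x) x + z2) x := by
    intro x hx
    have := ((h_ode x hx).const_mul z1).add ((hasDerivAt_id x).const_mul z2)
    simp only [mul_one] at this
    exact this
  have hφcont : ContinuousOn φ (Set.Ioi (0:ℝ)) := fun x hx =>
    (hφderiv x hx).continuousAt.continuousWithinAt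
  have hφanti : StrictAntiOn φ (Set.Ioi (0:ℝ)) := by
    apply strictAntiOn_of_deriv_neg (convex_Ioi 0) hφcont
    intro x hx
    rw [interior_Ioi] at hx
    rw [(hφderiv x hx).deriv]
    nlinarith [hF_neg x hx]
  -- blow-up bound near 0 : for x ∈ (0,1], c1 x ≥ c1 1 - (z1/B) log x
  set m : ℝ := c1 1 with hm
  have hm_pos : 0 < m := h_pos 1 one_pos
  set B : ℝ := -z2 * (1 / m + g11) + z1 * g12 with hB
  have hB_pos : 0 < B := by
    have h1 : 0 < 1 / m := one_div_pos.mpr hm_pos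
    have h2 : 0 < -z2 * (1 / m + g11) := mul_pos (by linarith) (by linarith)
    have h3 : 0 < z1 * g12 := mul_pos hz1 hg12
    rw [hB]; linarith
  set g : ℝ → ℝ := fun x => c1 x + (z1 / B) * Real.log x with hg
  have hganti : AntitoneOn g (Set.Ioc (0:ℝ) 1) := by
    have hgderiv : ∀ x ∈ Set.Ioo (0:ℝ) 1,
        HasDerivAt g (F z1 z2 g11 g22 g12 (c1 x) x + (z1 / B) * x⁻¹) x := by
      intro x hx
      exact (h_ode x hx.1).add ((Real.hasDerivAt_log (ne_of_gt hx.1)).const_mul (z1 / B))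
    apply antitoneOn_of_deriv_nonpos (convex_Ioc 0 1)
    · intro x hx
      exact ((h_ode x hx.1).continuousAt.add
        (((Real.continuousAt_log (ne_of_gt hx.1)).const_smul (z1 / B)))).continuousWithinAt
    · rw [interior_Ioc]
      intro x hx
      exact (hgderiv x hx).differentiableAt.differentiableWithinAt
    · rw [interior_Ioc]
      intro x hx
      rw [(hgderiv x hx).deriv]
      -- show F + (z1/B)/x ≤ 0
      have hx0 : 0 < x := hx.1
      have hcm : m ≤ c1 x := le_of_lt (hc1anti hx0 (by norm_num) hx.2)
      have hc1x : 0 < c1 x := h_pos x hx0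
      have hDle : -(z2 * (1 / c1 x + g11) - z1 * g12) ≤ B := by
        have : 1 / c1 x ≤ 1 / m := one_div_le_one_div_of_le hm_pos hcm
        nlinarith
      have hNge : z1 / x ≤ z1 * (1 / x + g22) - z2 * g12 := by
        have h1 : 0 < 1 / x := one_div_pos.mpr hx0
        rw [div_eq_mul_one_div]
        nlinarith
      have hDpos : 0 < -(z2 * (1 / c1 x + g11) - z1 * g12) := by
        have := hden x hx0; linarith
      have hFle : F z1 z2 g11 g22 g12 (c1 x) x ≤ -(z1 / x / B) := by
        have h1 : z1 / x / B ≤ (z1 * (1 / x + g22) - z2 * g12) /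
            (-(z2 * (1 / c1 x + g11) - z1 * g12)) :=
          div_le_div₀ (le_trans (by positivity) hNge) hNge hDpos hDle
        have h2 : F z1 z2 g11 g22 g12 (c1 x) x =
            -((z1 * (1 / x + g22) - z2 * g12) /
              (-(z2 * (1 / c1 x + g11) - z1 * g12))) := by
          rw [F, div_neg, neg_neg]
        rw [h2]
        linarith
      have : (z1 / B) * x⁻¹ = z1 / x / B := by
        ring
      linarith [hFle, this.le, this.ge]
  -- choose the left endpoint ε with φ ε ≥ K
  set T : ℝ := max m ((K - z2) / z1) with hT
  set ε : ℝ := Real.exp ((B / z1) * (m - T)) with hε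
  have hε_pos : 0 < ε := Real.exp_pos _
  have hε_le1 : ε ≤ 1 := by
    rw [hε, Real.exp_le_one_iff]
    have hmT : m - T ≤ 0 := by
      have := le_max_left m ((K - z2) / z1); linarith
    have : 0 < B / z1 := by positivity
    nlinarith
  have hc1ε : T ≤ c1 ε := by
    have h1 : g 1 ≤ g ε := hganti ⟨hε_pos, hε_le1⟩ ⟨one_pos, le_refl 1⟩ hε_le1
    have hlog : Real.log ε = (B / z1) * (m - T) := Real.log_exp _
    have hB0 : B ≠ 0 := ne_of_gt hB_pos
    have hz10 : z1 ≠ 0 := ne_of_gt hz1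
    have : (z1 / B) * Real.log ε = m - T := by
      rw [hlog]; field_simp
    simp only [hg, Real.log_one, mul_zero, add_zero] at h1
    rw [this] at h1
    linarith [hm.le, hm.ge]
  have hφε : K ≤ φ ε := by
    have h1 : (K - z2) / z1 ≤ c1 ε :=
      le_trans (le_max_right _ _) hc1ε
    have h2 : K - z2 ≤ z1 * c1 ε := by
      rw [div_le_iff₀ hz1] at h1; linarith [h1]
    have h3 : z2 ≤ z2 * ε := by nlinarith
    simp only [hφ]
    linarith
  -- choose the right endpoint b with φ b ≤ K
  set b : ℝ := max 1 ((z1 * m - K) / (-z2)) with hb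
  have hb1 : (1:ℝ) ≤ b := le_max_left _ _
  have hb_pos : 0 < b := lt_of_lt_of_le one_pos hb1
  have hφb : φ b ≤ K := by
    have hc1b : c1 b ≤ m := by
      rcases eq_or_lt_of_le hb1 with h | h
      · rw [← h]
      · exact le_of_lt (hc1anti (Set.mem_Ioi.mpr one_pos) (Set.mem_Ioi.mpr hb_pos) h)
    have h1 : (z1 * m - K) / (-z2) ≤ b := le_max_right _ _
    have h2 : z1 * m - K ≤ b * (-z2) := by
      rw [div_le_iff₀ (by linarith : (0:ℝ) < -z2)] at h1; linarith
    simp only [hφ]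
    nlinarith
  -- intermediate value theorem
  have hεb : ε ≤ b := le_trans hε_le1 hb1
  have hIcc : Set.Icc ε b ⊆ Set.Ioi (0:ℝ) := fun x hx =>
    Set.mem_Ioi.mpr (lt_of_lt_of_le hε_pos hx.1)
  have hivt := intermediate_value_Icc' hεb (hφcont.mono hIcc)
  have hKmem : K ∈ Set.Icc (φ b) (φ ε) := ⟨hφb, hφε⟩
  obtain ⟨x, hxmem, hxK⟩ := hivt hKmem
  have hx_pos : 0 < x := lt_of_lt_of_le hε_pos hxmem.1
  refine ⟨x, ⟨hx_pos, hxK⟩, ?_⟩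
  intro y hy
  exact hφanti.injOn (Set.mem_Ioi.mpr hy.1) (Set.mem_Ioi.mpr hx_pos)
    ((show φ y = K from hy.2).trans hxK.symm)
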